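/- Let (D, g, h) be a Czech hat game with a directionless leaf ℓ whose unique neighbor is u. If h ℓ > g ℓ · (g u + 1), then ℓ is deletable. -/

import Mathlib

/-- A Czech hat game on the digraph with adjacency `D` (sage `v` sees sage `u`
iff `D v u`), guessness `g`, and hatness `h`, is winnable: there is a strategy
assigning to each sage `v` a set of `g v` guesses, depending only on the hats
she sees, such that for every coloring some sage guesses her own hat color. -/
def HatGame.Winnable {V : Type*} (D : V → V → Prop) (g h : V → ℕ) : Prop :=
  ∃ F : ∀ v : V, (∀ u : V, Fin (h u)) → Finset (Fin (h v)),
    (∀ (v : V) (c c' : ∀ u : V, Fin (h u)),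
        (∀ u : V, D v u → c u = c' u) → F v c = F v c') ∧
    (∀ (v : V) (c : ∀ u : V, Fin (h u)), (F v c).card = g v) ∧
    (∀ c : ∀ u : V, Fin (h u), ∃ v : V, c v ∈ F v c)

/-- A leaf `ℓ` with neighbor `u` satisfying `h ℓ > g ℓ * (g u + 1)`
is deletable in any Czech game. -/
theorem czech_leaf_deletable {V : Type*} [Fintype V]
    (D : V → V → Prop) (hloop : ∀ v, ¬ D v v)
    (g h : V → ℕ) (hgh : ∀ v, 0 < g v ∧ g v < h v)
    (ℓ u : V) (hℓu : ℓ ≠ u)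
    (hout : ∀ w : V, D ℓ w ↔ w = u)
    (hin : ∀ w : V, D w ℓ ↔ w = u)
    (hratio : h ℓ > g ℓ * (g u + 1)) :
    (HatGame.Winnable (fun a b : {w : V // w ≠ ℓ} => D a b)
        (fun a => g a) (fun a => h a) ↔
      HatGame.Winnable D g h) := by
  classical
  have hu : u ≠ ℓ := fun e => hℓu e.symm
  have hpos : ∀ v, 0 < h v := fun v => lt_trans (hgh v).1 (hgh v).2
  have hsfun : ∀ v : V, ∃ s : Finset (Fin (h v)), s.card = g v := by
    intro v
    obtain ⟨s, -, hs⟩ := Finset.exists_subset_card_eq (s := (Finset.univ : Finset (Fin (h v)))) (n := g v)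
      (by simpa using (hgh v).2.le)
    exact ⟨s, hs⟩
  choose sfun hsfun using hsfun
  have hpad : ∀ (w : V) (s : Finset (Fin (h w))), ∃ t : Finset (Fin (h w)),
      (s.card ≤ g w → s ⊆ t) ∧ t.card = g w := by
    intro w s
    by_cases hs : s.card ≤ g w
    · obtain ⟨t, hst, -, ht⟩ := Finset.exists_subsuperset_card_eq (Finset.subset_univ s) hs
        (by simpa using (hgh w).2.le)
      exact ⟨t, fun _ => hst, ht⟩
    · exact ⟨sfun w, fun hle => absurd hle hs, hsfun w⟩
  choose pad hpadsub hpadcard using hpad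
  constructor
  · -- easy direction: reduced winnable → full winnable
    rintro ⟨F, hdep, hcard, hwin⟩
    refine ⟨fun v c => if hv : v = ℓ then sfun v else F ⟨v, hv⟩ (fun b => c b), ?_, ?_, ?_⟩
    · intro v c c' hcc
      by_cases hv : v = ℓ
      · simp [hv]
      · simp only [dif_neg hv]
        exact hdep ⟨v, hv⟩ _ _ (fun b hb => hcc b hb)
    · intro v c
      by_cases hv : v = ℓ
      · simp [hv, hsfun]
      · simp only [dif_neg hv]
        exact hcard ⟨v, hv⟩ _
    · intro c
      obtain ⟨a, ha⟩ := hwin (fun b => c b)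
      exact ⟨a.1, by simp only [dif_neg a.2]; exact ha⟩
  · -- hard direction: full winnable → reduced winnable
    rintro ⟨F, hdep, hcard, hwin⟩
    -- F ℓ depends only on the color of u
    have hFℓ : ∀ c c' : ∀ v, Fin (h v), c u = c' u → F ℓ c = F ℓ c' := by
      intro c c' hcc
      exact hdep ℓ c c' (fun w hw => by rw [(hout w).mp hw]; exact hcc)
    -- F v does not depend on v's own color
    have hFown : ∀ (v : V) (c c' : ∀ w, Fin (h w)), (∀ w, w ≠ v → c w = c' w) →
        F v c = F v c' := by
      intro v c c' hcc
      exact hdep v c c' (fun w hw => hcc w (fun e => hloop v (by rw [e] at hw; exact hw)))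
    let base : (∀ b : {w : V // w ≠ ℓ}, Fin (h b.1)) → ∀ v : V, Fin (h v) :=
      fun c v => if hv : v = ℓ then ⟨0, hpos v⟩ else c ⟨v, hv⟩
    let ext : (∀ b : {w : V // w ≠ ℓ}, Fin (h b.1)) → Fin (h ℓ) → ∀ v : V, Fin (h v) :=
      fun c y => Function.update (base c) ℓ y
    have hext_self : ∀ c y, ext c y ℓ = y := fun c y => Function.update_self _ _ _
    have hext_ne : ∀ c y v (hv : v ≠ ℓ), ext c y v = c ⟨v, hv⟩ := by
      intro c y v hv
      show Function.update (base c) ℓ y v = _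
      rw [Function.update_of_ne hv]
      exact dif_neg hv
    let y0 : Fin (h ℓ) := ⟨0, hpos ℓ⟩
    let Bad : ∀ w : V, (∀ b : {x : V // x ≠ ℓ}, Fin (h b.1)) → Finset (Fin (h w)) :=
      fun w c => Finset.univ.filter (fun x : Fin (h w) =>
        ∀ y : Fin (h ℓ), y ∉ F ℓ (Function.update (ext c y) w x) →
          x ∈ F w (Function.update (ext c y) w x))
    have hBadmem : ∀ w c (x : Fin (h w)), x ∈ Bad w c ↔
        ∀ y : Fin (h ℓ), y ∉ F ℓ (Function.update (ext c y) w x) →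
          x ∈ F w (Function.update (ext c y) w x) := by
      intro w c x
      simp [Bad]
    -- the counting lemma: the bad set at u has at most g u elements
    have hBadcard : ∀ c, (Bad u c).card ≤ g u := by
      intro c
      have hstep : ∀ x ∈ Bad u c,
          h ℓ - g ℓ ≤ (Finset.univ.filter (fun y : Fin (h ℓ) => x ∈ F u (ext c y))).card := by
        intro x hx
        rw [hBadmem] at hx
        have hGsub : (F ℓ (Function.update (ext c y0) u x))ᶜ ⊆
            Finset.univ.filter (fun y : Fin (h ℓ) => x ∈ F u (ext c y)) := by
          intro y hy
          rw [Finset.mem_compl] at hy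
          have h1 : F ℓ (Function.update (ext c y) u x)
              = F ℓ (Function.update (ext c y0) u x) :=
            hFℓ _ _ (by rw [Function.update_self, Function.update_self])
          have h2 : F u (Function.update (ext c y) u x) = F u (ext c y) :=
            hFown u _ _ (fun w hw => Function.update_of_ne hw _ _)
          have hx' := hx y (by rw [h1]; exact hy)
          rw [h2] at hx'
          rw [Finset.mem_filter]
          exact ⟨Finset.mem_univ y, hx'⟩
        calc h ℓ - g ℓ = (F ℓ (Function.update (ext c y0) u x))ᶜ.card := by
              rw [Finset.card_compl, hcard, Fintype.card_fin]
          _ ≤ _ := Finset.card_le_card hGsub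
      have key : (Bad u c).card * (h ℓ - g ℓ) ≤ h ℓ * g u := by
        calc (Bad u c).card * (h ℓ - g ℓ)
            = ∑ _x ∈ Bad u c, (h ℓ - g ℓ) := by rw [Finset.sum_const, smul_eq_mul]
          _ ≤ ∑ x ∈ Bad u c,
              (Finset.univ.filter (fun y : Fin (h ℓ) => x ∈ F u (ext c y))).card :=
              Finset.sum_le_sum hstep
          _ = ∑ x ∈ Bad u c, ∑ y : Fin (h ℓ), if x ∈ F u (ext c y) then 1 else 0 := by
              refine Finset.sum_congr rfl fun x _ => ?_
              rw [Finset.card_filter]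
          _ = ∑ y : Fin (h ℓ), ∑ x ∈ Bad u c, if x ∈ F u (ext c y) then 1 else 0 :=
              Finset.sum_comm
          _ ≤ ∑ _y : Fin (h ℓ), g u := by
              refine Finset.sum_le_sum fun y _ => ?_
              rw [← Finset.card_filter]
              calc ((Bad u c).filter (fun x => x ∈ F u (ext c y))).card
                  ≤ (F u (ext c y)).card :=
                    Finset.card_le_card (fun x hx => (Finset.mem_filter.mp hx).2)
                _ = g u := hcard u _
          _ = h ℓ * g u := by simp [mul_comm]
      by_contra hgt
      push_neg at hgt
      have hgt' : g u + 1 ≤ (Bad u c).card := hgt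
      obtain ⟨t, ht⟩ : ∃ t, h ℓ = g ℓ + t := ⟨h ℓ - g ℓ, by have := (hgh ℓ).2; omega⟩
      have htd : h ℓ - g ℓ = t := by omega
      rw [htd] at key
      have h1 : (g u + 1) * t ≤ (Bad u c).card * t := Nat.mul_le_mul_right t hgt'
      nlinarith [key, hratio, h1, ht]
    -- congruence of the bad set at u
    have hBadcong : ∀ (c c' : ∀ b : {x : V // x ≠ ℓ}, Fin (h b.1)),
        (∀ b : {x : V // x ≠ ℓ}, D u b.1 → c b = c' b) → Bad u c = Bad u c' := by
      intro c c' hcc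
      apply Finset.ext
      intro x
      rw [hBadmem, hBadmem]
      have h1 : ∀ y, F ℓ (Function.update (ext c y) u x)
          = F ℓ (Function.update (ext c' y) u x) :=
        fun y => hFℓ _ _ (by rw [Function.update_self, Function.update_self])
      have h2 : ∀ y, F u (Function.update (ext c y) u x)
          = F u (Function.update (ext c' y) u x) := by
        intro y
        apply hdep
        intro w hw
        have hwu : w ≠ u := fun e => hloop u (by rw [e] at hw; exact hw)
        rw [Function.update_of_ne hwu, Function.update_of_ne hwu]
        by_cases hwℓ : w = ℓ
        · subst hwℓ
          rw [hext_self, hext_self]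
        · rw [hext_ne c y w hwℓ, hext_ne c' y w hwℓ]
          exact hcc ⟨w, hwℓ⟩ hw
      exact forall_congr' fun y => by rw [h1 y, h2 y]
    refine ⟨fun a c => if (a : V) = u then pad a.1 (Bad a.1 c) else F a.1 (ext c y0),
      ?_, ?_, ?_⟩
    · -- dependence
      rintro ⟨w, hwℓ⟩ c c' hcc
      by_cases ha : w = u
      · subst ha
        simp only [if_pos (show ((⟨w, hwℓ⟩ : {x : V // x ≠ ℓ}) : V) = w from rfl)]
        exact congrArg _ (hBadcong c c' (fun b hb => hcc b hb))
      · simp only [if_neg ha]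
        apply hdep
        intro z hz
        have hzℓ : z ≠ ℓ := fun e => ha ((hin w).mp (by rw [e] at hz; exact hz))
        rw [hext_ne c y0 z hzℓ, hext_ne c' y0 z hzℓ]
        exact hcc ⟨z, hzℓ⟩ hz
    · -- cardinality
      intro a c
      by_cases ha : (a : V) = u
      · simp only [if_pos ha]
        exact hpadcard _ _
      · simp only [if_neg ha]
        exact hcard _ _
    · -- winning
      intro c
      by_cases hx : c ⟨u, hu⟩ ∈ Bad u c
      · refine ⟨⟨u, hu⟩, ?_⟩
        simp only [if_pos (show ((⟨u, hu⟩ : {w : V // w ≠ ℓ}) : V) = u from rfl)]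
        exact hpadsub u (Bad u c) (hBadcard c) hx
      · rw [hBadmem] at hx
        push_neg at hx
        obtain ⟨y, hy1, hy2⟩ := hx
        have hfix : Function.update (ext c y) u (c ⟨u, hu⟩) = ext c y := by
          rw [← hext_ne c y u hu]
          exact Function.update_eq_self _ _
        rw [hfix] at hy1 hy2
        obtain ⟨v, hv⟩ := hwin (ext c y)
        have hvℓ : v ≠ ℓ := by
          rintro rfl
          rw [hext_self] at hv
          exact hy1 hv
        have hvu : v ≠ u := by
          rintro rfl
          rw [hext_ne c y v hu] at hv
          exact hy2 hv
        refine ⟨⟨v, hvℓ⟩, ?_⟩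
        simp only [if_neg (show ¬((⟨v, hvℓ⟩ : {w : V // w ≠ ℓ}) : V) = u from hvu)]
        have heq : F v (ext c y0) = F v (ext c y) := by
          apply hdep
          intro z hz
          have hzℓ : z ≠ ℓ := fun e => hvu ((hin v).mp (by rw [e] at hz; exact hz))
          rw [hext_ne c y0 z hzℓ, hext_ne c y z hzℓ]
        rw [heq, ← hext_ne c y v hvℓ]
        exact hv
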